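/- Let F be a field, q ∈ F with q ≠ 0, and f, g ∈ F[h] with deg f ≥ 1. Then the lexicographical degree on H_q(f,g) is multiplicative: DEg(ab) = DEg a + DEg b for all a, b ∈ H_q(f,g). -/

import Mathlib

open Polynomial

/-- The three generators `x`, `y`, `h` of a quantum generalized Heisenberg algebra. -/
inductive QGHAGen : Type
  | x : QGHAGen
  | y : QGHAGen
  | h : QGHAGen

/-- The defining relations of the quantum generalized Heisenberg algebra `H_q(f,g)`:
`h*x = x*f(h)`, `y*h = f(h)*y`, and `y*x - q*(x*y) = g(h)`. -/
inductive QGHARel (F : Type*) [Field F] (q : F) (f g : F[X]) :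
    FreeAlgebra F QGHAGen → FreeAlgebra F QGHAGen → Prop
  | hx : QGHARel F q f g
      (FreeAlgebra.ι F QGHAGen.h * FreeAlgebra.ι F QGHAGen.x)
      (FreeAlgebra.ι F QGHAGen.x * aeval (FreeAlgebra.ι F QGHAGen.h) f)
  | yh : QGHARel F q f g
      (FreeAlgebra.ι F QGHAGen.y * FreeAlgebra.ι F QGHAGen.h)
      (aeval (FreeAlgebra.ι F QGHAGen.h) f * FreeAlgebra.ι F QGHAGen.y)
  | yx : QGHARel F q f g
      (FreeAlgebra.ι F QGHAGen.y * FreeAlgebra.ι F QGHAGen.x)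
      (q • (FreeAlgebra.ι F QGHAGen.x * FreeAlgebra.ι F QGHAGen.y)
        + aeval (FreeAlgebra.ι F QGHAGen.h) g)

/-- The quantum generalized Heisenberg algebra `H_q(f,g)`. -/
def QGHA (F : Type*) [Field F] (q : F) (f g : F[X]) : Type _ :=
  RingQuot (QGHARel F q f g)

namespace QGHA

variable {F : Type*} [Field F] (q : F) (f g : F[X])

instance : Ring (QGHA F q f g) :=
  inferInstanceAs (Ring (RingQuot (QGHARel F q f g)))

instance : Algebra F (QGHA F q f g) :=
  inferInstanceAs (Algebra F (RingQuot (QGHARel F q f g)))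

/-- The generator `x` of `H_q(f,g)`. -/
def x : QGHA F q f g :=
  RingQuot.mkAlgHom F (QGHARel F q f g) (FreeAlgebra.ι F QGHAGen.x)

/-- The generator `y` of `H_q(f,g)`. -/
def y : QGHA F q f g :=
  RingQuot.mkAlgHom F (QGHARel F q f g) (FreeAlgebra.ι F QGHAGen.y)

/-- The generator `h` of `H_q(f,g)`. -/
def h : QGHA F q f g :=
  RingQuot.mkAlgHom F (QGHARel F q f g) (FreeAlgebra.ι F QGHAGen.h)

end QGHA

/-- The lexicographical degree of an element of `H_q(f,g)`, computed with respect to a basis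
`B` of monomials `x^i h^j y^k`: it is the lexicographic maximum of the pairs `(i,k)` such
that some `x^i h^j y^k` occurs with nonzero coefficient, and `⊥` (i.e. `(−∞,−∞)`) for `0`. -/
noncomputable def QGHA.DEg {F : Type*} [Field F] {q : F} {f g : F[X]}
    (B : Module.Basis (ℕ × ℕ × ℕ) F (QGHA F q f g)) (a : QGHA F q f g) : WithBot (ℕ × ℕ) :=
  (((B.repr a).support.image (fun t => toLex (t.1, t.2.2))).max).map (fun z => ofLex z)


/-! ### Auxiliary development -/

/-- iterated composition of `f`: `fiter f 0 = X`, `fiter f (m+1) = f.comp (fiter f m)` -/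
noncomputable def fiter {F : Type*} [Field F] (f : F[X]) : ℕ → F[X]
  | 0 => Polynomial.X
  | (m+1) => f.comp (fiter f m)

section FiterDeg
variable {F : Type*} [Field F]

lemma fiter_natDegree_ne_zero {f : F[X]} (hf : 1 ≤ f.degree) (m : ℕ) :
    (fiter f m).natDegree ≠ 0 := by
  have hfnd : f.natDegree ≠ 0 := by
    have := Polynomial.natDegree_pos_iff_degree_pos.mpr (lt_of_lt_of_le (by norm_num) hf)
    omega
  induction m with
  | zero => simp [fiter]
  | succ m ih => rw [fiter, Polynomial.natDegree_comp]; exact mul_ne_zero hfnd ih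

lemma comp_fiter_ne_zero {f : F[X]} (hf : 1 ≤ f.degree) (m : ℕ) {p : F[X]} (hp : p ≠ 0) :
    p.comp (fiter f m) ≠ 0 := by
  intro hz
  have := Polynomial.leadingCoeff_comp (p := p) (q := fiter f m) (fiter_natDegree_ne_zero hf m)
  rw [hz] at this
  simp only [Polynomial.leadingCoeff_zero] at this
  have h1 : p.leadingCoeff ≠ 0 := Polynomial.leadingCoeff_ne_zero.mpr hp
  have h2 : (fiter f m).leadingCoeff ≠ 0 := by
    apply Polynomial.leadingCoeff_ne_zero.mpr
    intro hz2
    exact fiter_natDegree_ne_zero hf m (by rw [hz2]; simp)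
  exact (mul_ne_zero h1 (pow_ne_zero _ h2)) this.symm
end FiterDeg

section Generic
variable {F : Type*} [Field F] {R : Type*} [Ring R] [Algebra F R]
variable {f : F[X]} {q : F} {g : F[X]} {X Y H : R}

lemma fiter_succ' (f : F[X]) (k : ℕ) : fiter f (k+1) = (fiter f k).comp f := by
  induction k with
  | zero => simp [fiter]
  | succ k ih =>
    rw [show fiter f (k+1+1) = f.comp (fiter f (k+1)) from rfl, ih, ← Polynomial.comp_assoc]
    exact congrArg (fun t => Polynomial.comp t f) ih

section comm
variable (hx : H * X = X * aeval H f) (hy : Y * H = aeval H f * Y)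

include hx in
lemma a1 (p : F[X]) : aeval H p * X = X * aeval H (p.comp f) := by
  induction p using Polynomial.induction_on' with
  | add p r hp hr => rw [map_add, add_mul, hp, hr, Polynomial.add_comp, map_add, mul_add]
  | monomial n c =>
    have hn : ∀ n : ℕ, H ^ n * X = X * (aeval H f) ^ n := by
      intro n
      induction n with
      | zero => simp
      | succ n ih => rw [pow_succ, mul_assoc, hx, ← mul_assoc, ih, mul_assoc, ← pow_succ]
    rw [Polynomial.monomial_comp]
    simp only [Polynomial.aeval_monomial, map_mul, Polynomial.aeval_C, map_pow, Polynomial.aeval_X]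
    rw [mul_assoc, hn, ← mul_assoc, ← mul_assoc, Algebra.commutes]

include hy in
lemma a2 (p : F[X]) : Y * aeval H p = aeval H (p.comp f) * Y := by
  induction p using Polynomial.induction_on' with
  | add p r hp hr => rw [map_add, mul_add, hp, hr, Polynomial.add_comp, map_add, add_mul]
  | monomial n c =>
    have hn : ∀ n : ℕ, Y * H ^ n = (aeval H f) ^ n * Y := by
      intro n
      induction n with
      | zero => simp
      | succ n ih => rw [pow_succ, ← mul_assoc, ih, mul_assoc, hy, ← mul_assoc, ← pow_succ]
    rw [Polynomial.monomial_comp]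
    simp only [Polynomial.aeval_monomial, map_mul, Polynomial.aeval_C, map_pow, Polynomial.aeval_X]
    rw [← mul_assoc, ← Algebra.commutes, mul_assoc, hn, ← mul_assoc]

include hx in
lemma a3 (p : F[X]) (m : ℕ) : aeval H p * X ^ m = X ^ m * aeval H (p.comp (fiter f m)) := by
  induction m generalizing p with
  | zero => simp [fiter]
  | succ m ih =>
    rw [pow_succ', ← mul_assoc, a1 hx, mul_assoc, ih, ← mul_assoc, ← pow_succ',
      Polynomial.comp_assoc]
    rfl

include hy in
lemma a4 (p : F[X]) (k : ℕ) : Y ^ k * aeval H p = aeval H (p.comp (fiter f k)) * Y ^ k := by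
  induction k generalizing p with
  | zero => simp [fiter]
  | succ k ih =>
    rw [pow_succ', mul_assoc, ih, ← mul_assoc, a2 hy, mul_assoc, ← pow_succ',
      Polynomial.comp_assoc, ← fiter_succ']
end comm

/-- span of monomials `X^a H^j Y^b` with `P a b` -/
def sp (X Y H : R) (P : ℕ → ℕ → Prop) : Submodule F R :=
  Submodule.span F {v | ∃ a j b, P a b ∧ v = X ^ a * H ^ j * Y ^ b}

lemma sp_mono {P Q : ℕ → ℕ → Prop} (hPQ : ∀ a b, P a b → Q a b) :
    sp (F := F) X Y H P ≤ sp X Y H Q := by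
  apply Submodule.span_mono
  rintro v ⟨a, j, b, hab, rfl⟩
  exact ⟨a, j, b, hPQ a b hab, rfl⟩

lemma gen_mem_sp {P : ℕ → ℕ → Prop} {a b : ℕ} (j : ℕ) (hab : P a b) :
    X ^ a * H ^ j * Y ^ b ∈ sp (F := F) X Y H P :=
  Submodule.subset_span ⟨a, j, b, hab, rfl⟩

lemma mono_expand (a b : ℕ) (p : F[X]) :
    X ^ a * aeval H p * Y ^ b = ∑ n ∈ p.support, p.coeff n • (X ^ a * H ^ n * Y ^ b) := by
  conv_lhs => rw [p.as_sum_support]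
  rw [map_sum, Finset.mul_sum, Finset.sum_mul]
  apply Finset.sum_congr rfl
  intro n _
  rw [Polynomial.aeval_monomial, Algebra.smul_def, ← mul_assoc, ← mul_assoc,
    ← Algebra.commutes (p.coeff n) (X ^ a)]
  simp [mul_assoc]

lemma mono_mem_sp {P : ℕ → ℕ → Prop} {a b : ℕ} (p : F[X]) (hab : P a b) :
    X ^ a * aeval H p * Y ^ b ∈ sp (F := F) X Y H P := by
  rw [mono_expand]
  exact Submodule.sum_mem _ fun n _ => Submodule.smul_mem _ _ (gen_mem_sp n hab)

lemma sp_mul_closure (L Rg : R) {P Q : ℕ → ℕ → Prop}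
    (hgen : ∀ a j b, P a b → L * (X ^ a * H ^ j * Y ^ b) * Rg ∈ sp (F := F) X Y H Q) :
    ∀ u ∈ sp (F := F) X Y H P, L * u * Rg ∈ sp (F := F) X Y H Q := by
  intro u hu
  induction hu using Submodule.span_induction with
  | mem v hv => obtain ⟨a, j, b, hab, rfl⟩ := hv; exact hgen a j b hab
  | zero => simp only [mul_zero, zero_mul]; exact Submodule.zero_mem _
  | add v w _ _ hv hw => rw [mul_add, add_mul]; exact Submodule.add_mem _ hv hw
  | smul c v _ hv => rw [mul_smul_comm, smul_mul_assoc]; exact Submodule.smul_mem _ _ hv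
variable (hx : H * X = X * aeval H f) (hy : Y * H = aeval H f * Y)
  (hyx : Y * X = q • (X * Y) + aeval H g)

include hx hyx in
lemma yxm (m : ℕ) : ∃ t ∈ sp (F := F) X Y H (fun a b => a < m ∧ b = 0),
    Y * X ^ m = q ^ m • (X ^ m * Y) + t := by
  induction m with
  | zero => exact ⟨0, Submodule.zero_mem _, by simp⟩
  | succ m ih =>
    obtain ⟨t, ht, heq⟩ := ih
    refine ⟨q • (X * t) + X ^ m * aeval H (g.comp (fiter f m)), ?_, ?_⟩
    · apply Submodule.add_mem
      · apply Submodule.smul_mem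
        have := sp_mul_closure (F := F) X 1 (P := fun a b => a < m ∧ b = 0)
          (Q := fun a b => a < m + 1 ∧ b = 0) ?_ t ht
        · simpa using this
        · rintro a j b ⟨ha, rfl⟩
          rw [mul_one, ← mul_assoc, ← mul_assoc, ← pow_succ']
          exact gen_mem_sp j ⟨by omega, rfl⟩
      · have := mono_mem_sp (X := X) (Y := Y) (H := H)
          (P := fun a b => a < m + 1 ∧ b = 0) (a := m) (b := 0)
          (g.comp (fiter f m)) ⟨by omega, rfl⟩
        simpa using this
    · calc Y * X ^ (m+1) = (Y * X) * X ^ m := by rw [pow_succ', ← mul_assoc]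
        _ = q • (X * (Y * X ^ m)) + aeval H g * X ^ m := by
            rw [hyx, add_mul, smul_mul_assoc, mul_assoc]
        _ = q • (X * (q ^ m • (X ^ m * Y) + t)) + X ^ m * aeval H (g.comp (fiter f m)) := by
            rw [heq, a3 hx]
        _ = q ^ (m+1) • (X ^ (m+1) * Y) + (q • (X * t) + X ^ m * aeval H (g.comp (fiter f m))) := by
            rw [mul_add, mul_smul_comm, smul_add, smul_smul, ← pow_succ', add_assoc,
              pow_succ' X, mul_assoc]

include hx hy hyx in
lemma ykxm (k m : ℕ) : ∃ t ∈ sp (F := F) X Y H (fun a b => a < m ∧ b ≤ k),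
    Y ^ k * X ^ m = q ^ (k * m) • (X ^ m * Y ^ k) + t := by
  induction k with
  | zero => exact ⟨0, Submodule.zero_mem _, by simp⟩
  | succ k ih =>
    obtain ⟨t, ht, heq⟩ := ih
    obtain ⟨s, hs, hseq⟩ := yxm hx hyx (q := q) (g := g) m
    refine ⟨q ^ (k * m) • (s * Y ^ k) + Y * t, ?_, ?_⟩
    · apply Submodule.add_mem
      · apply Submodule.smul_mem
        have := sp_mul_closure (F := F) 1 (Y ^ k) (P := fun a b => a < m ∧ b = 0)
          (Q := fun a b => a < m ∧ b ≤ k + 1) ?_ s hs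
        · simpa using this
        · rintro a j b ⟨ha, rfl⟩
          rw [one_mul, pow_zero, mul_one]
          exact gen_mem_sp j ⟨ha, by omega⟩
      · have := sp_mul_closure (F := F) Y 1 (P := fun a b => a < m ∧ b ≤ k)
          (Q := fun a b => a < m ∧ b ≤ k + 1) ?_ t ht
        · simpa using this
        · rintro a j b ⟨ha, hb⟩
          rw [mul_one]
          obtain ⟨sa, hsa, hsaeq⟩ := yxm hx hyx (q := q) (g := g) a
          have key : Y * (X ^ a * H ^ j * Y ^ b)
              = q ^ a • (X ^ a * aeval H ((Polynomial.X ^ j : F[X]).comp f) * Y ^ (b+1))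
                + sa * (H ^ j * Y ^ b) := by
            calc Y * (X ^ a * H ^ j * Y ^ b) = (Y * X ^ a) * (H ^ j * Y ^ b) := by
                  rw [← mul_assoc, ← mul_assoc, mul_assoc (Y * X ^ a) (H ^ j) (Y ^ b)]
              _ = q ^ a • (X ^ a * (Y * H ^ j) * Y ^ b) + sa * (H ^ j * Y ^ b) := by
                  rw [hsaeq, add_mul, smul_mul_assoc, mul_assoc (X ^ a) Y (H ^ j * Y ^ b),
                    ← mul_assoc Y (H ^ j) (Y ^ b), ← mul_assoc (X ^ a) (Y * H ^ j) (Y ^ b)]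
              _ = _ := by
                  rw [show (H : R) ^ j = aeval H ((Polynomial.X : F[X]) ^ j) by
                      rw [map_pow, Polynomial.aeval_X], a2 hy,
                    mul_assoc (X ^ a), mul_assoc _ Y (Y ^ b), ← pow_succ',
                    ← mul_assoc (X ^ a)]
          rw [key]
          apply Submodule.add_mem
          · exact Submodule.smul_mem _ _ (mono_mem_sp _ ⟨ha, by omega⟩)
          · have := sp_mul_closure (F := F) 1 (H ^ j * Y ^ b) (P := fun a' b' => a' < a ∧ b' = 0)
              (Q := fun a' b' => a' < m ∧ b' ≤ k + 1) ?_ sa hsa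
            · simpa using this
            · rintro a' j' b' ⟨ha', rfl⟩
              rw [one_mul, pow_zero, mul_one, mul_assoc, ← mul_assoc (H ^ j') (H ^ j) (Y ^ b),
                ← pow_add, ← mul_assoc]
              exact gen_mem_sp (j' + j) ⟨by omega, by omega⟩
    · calc Y ^ (k+1) * X ^ m = Y * (Y ^ k * X ^ m) := by rw [pow_succ', mul_assoc]
        _ = q ^ (k * m) • (Y * (X ^ m * Y ^ k)) + Y * t := by
            rw [heq, mul_add, mul_smul_comm]
        _ = q ^ (k * m) • ((q ^ m • (X ^ m * Y) + s) * Y ^ k) + Y * t := by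
            rw [← mul_assoc, hseq]
        _ = q ^ ((k+1) * m) • (X ^ m * Y ^ (k+1)) + (q ^ (k * m) • (s * Y ^ k) + Y * t) := by
            rw [add_mul, smul_mul_assoc, smul_add, smul_smul, ← pow_add, mul_assoc, ← pow_succ',
              add_assoc]
            rw [show k * m + m = (k + 1) * m by ring]

include hx in
lemma a3Z (p : F[X]) (m : ℕ) (Z : R) :
    aeval H p * (X ^ m * Z) = X ^ m * (aeval H (p.comp (fiter f m)) * Z) := by
  rw [← mul_assoc, a3 hx, mul_assoc]

include hy in
lemma a4Z (r : F[X]) (k : ℕ) (Z : R) :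
    Y ^ k * (aeval H r * Z) = aeval H (r.comp (fiter f k)) * (Y ^ k * Z) := by
  rw [← mul_assoc, a4 hy, mul_assoc]

include hx hy hyx in
lemma core (i k m n : ℕ) (p r : F[X]) :
    ∃ t ∈ sp (F := F) X Y H (fun a b => toLex (a, b) < toLex (i + m, k + n)),
      (X ^ i * aeval H p * Y ^ k) * (X ^ m * aeval H r * Y ^ n)
        = X ^ (i + m) * aeval H (q ^ (k * m) •
            (p.comp (fiter f m) * r.comp (fiter f k))) * Y ^ (k + n) + t := by
  obtain ⟨t, ht, heq⟩ := ykxm hx hy hyx k m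
  refine ⟨X ^ i * (aeval H p * (t * (aeval H r * Y ^ n))), ?_, ?_⟩
  · have := sp_mul_closure (F := F) (X ^ i * aeval H p) (aeval H r * Y ^ n)
      (P := fun a b => a < m ∧ b ≤ k)
      (Q := fun a b => toLex (a, b) < toLex (i + m, k + n)) ?_ t ht
    · rw [mul_assoc, mul_assoc] at this; exact this
    · rintro a j b ⟨ha, hb⟩
      have key : X ^ i * aeval H p * (X ^ a * H ^ j * Y ^ b) * (aeval H r * Y ^ n)
          = X ^ (i + a) * aeval H (p.comp (fiter f a) * Polynomial.X ^ j
              * r.comp (fiter f b)) * Y ^ (b + n) := by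
        simp only [pow_add, map_mul, map_pow, Polynomial.aeval_X, mul_assoc]
        rw [a4Z hy, a3Z hx]
      rw [key]
      exact mono_mem_sp _ (by rw [Prod.Lex.lt_iff]; exact Or.inl (by simp only [ofLex_toLex]; omega))
  · have expand : (X ^ i * aeval H p * Y ^ k) * (X ^ m * aeval H r * Y ^ n)
        = X ^ i * (aeval H p * (Y ^ k * (X ^ m * (aeval H r * Y ^ n)))) := by
      simp only [mul_assoc]
    have main : X ^ i * (aeval H p * (X ^ m * (Y ^ k * (aeval H r * Y ^ n))))
        = X ^ (i + m) * aeval H (p.comp (fiter f m) * r.comp (fiter f k)) * Y ^ (k + n) := by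
      simp only [pow_add, map_mul, mul_assoc]
      rw [a4Z hy, a3Z hx]
    have hYX : Y ^ k * (X ^ m * (aeval H r * Y ^ n))
        = q ^ (k * m) • (X ^ m * (Y ^ k * (aeval H r * Y ^ n))) + t * (aeval H r * Y ^ n) := by
      rw [← mul_assoc, ← mul_assoc, heq]
      simp only [add_mul, smul_mul_assoc, mul_assoc]
    rw [expand, hYX, mul_add, mul_add, mul_smul_comm, mul_smul_comm, main, map_smul,
      mul_smul_comm, smul_mul_assoc]

lemma sp_mul_sp {P Q S : ℕ → ℕ → Prop}
    (hgen : ∀ a j b c l d, P a b → Q c d →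
      (X ^ a * H ^ j * Y ^ b) * (X ^ c * H ^ l * Y ^ d) ∈ sp (F := F) X Y H S) :
    ∀ u ∈ sp (F := F) X Y H P, ∀ v ∈ sp (F := F) X Y H Q, u * v ∈ sp (F := F) X Y H S := by
  intro u hu
  induction hu using Submodule.span_induction with
  | mem w hw =>
    obtain ⟨a, j, b, hab, rfl⟩ := hw
    intro v hv
    induction hv using Submodule.span_induction with
    | mem w' hw' => obtain ⟨c, l, d, hcd, rfl⟩ := hw'; exact hgen a j b c l d hab hcd
    | zero => rw [mul_zero]; exact Submodule.zero_mem _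
    | add v w _ _ h1 h2 => rw [mul_add]; exact Submodule.add_mem _ h1 h2
    | smul c v _ h1 => rw [mul_smul_comm]; exact Submodule.smul_mem _ _ h1
  | zero => intro v hv; rw [zero_mul]; exact Submodule.zero_mem _
  | add u w _ _ h1 h2 => intro v hv; rw [add_mul]; exact Submodule.add_mem _ (h1 v hv) (h2 v hv)
  | smul c u _ h1 => intro v hv; rw [smul_mul_assoc]; exact Submodule.smul_mem _ _ (h1 v hv)

include hx hy hyx in
lemma gen_mul_gen_mem (a j b c l d : ℕ) {S : ℕ → ℕ → Prop} (hS1 : S (a + c) (b + d))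
    (hS2 : ∀ a' b', toLex (a', b') < toLex (a + c, b + d) → S a' b') :
    (X ^ a * H ^ j * Y ^ b) * (X ^ c * H ^ l * Y ^ d) ∈ sp (F := F) X Y H S := by
  obtain ⟨t, ht, heq⟩ := core hx hy hyx a b c d (Polynomial.X ^ j) (Polynomial.X ^ l)
  rw [show (H : R) ^ j = aeval H ((Polynomial.X : F[X]) ^ j) by rw [map_pow, Polynomial.aeval_X],
    show (H : R) ^ l = aeval H ((Polynomial.X : F[X]) ^ l) by rw [map_pow, Polynomial.aeval_X],
    heq]
  exact Submodule.add_mem _ (mono_mem_sp _ hS1) (sp_mono hS2 ht)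

/-- monomials of lex-index `≤ d` -/
def W (X Y H : R) (d : Lex (ℕ × ℕ)) : Submodule F R :=
  sp X Y H (fun a b => toLex (a, b) ≤ d)

/-- monomials of lex-index `< d` -/
def Wlt (X Y H : R) (d : Lex (ℕ × ℕ)) : Submodule F R :=
  sp X Y H (fun a b => toLex (a, b) < d)

lemma toLex_add' (a b c d : ℕ) :
    toLex (a + c, b + d) = toLex (a, b) + toLex (c, d) := rfl

include hx hy hyx in
lemma W_mul_W {d1 d2 : Lex (ℕ × ℕ)} {u v : R} (hu : u ∈ W (F := F) X Y H d1)
    (hv : v ∈ W (F := F) X Y H d2) : u * v ∈ W (F := F) X Y H (d1 + d2) := by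
  refine sp_mul_sp (fun a j b c l d hab hcd => ?_) u hu v hv
  refine gen_mul_gen_mem hx hy hyx a j b c l d ?_ (fun a' b' hlt => ?_)
  · rw [toLex_add']; exact add_le_add hab hcd
  · rw [toLex_add'] at hlt; exact le_of_lt (lt_of_lt_of_le hlt (add_le_add hab hcd))

include hx hy hyx in
lemma Wlt_mul_W {d1 d2 : Lex (ℕ × ℕ)} {u v : R} (hu : u ∈ Wlt (F := F) X Y H d1)
    (hv : v ∈ W (F := F) X Y H d2) : u * v ∈ Wlt (F := F) X Y H (d1 + d2) := by
  refine sp_mul_sp (fun a j b c l d hab hcd => ?_) u hu v hv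
  refine gen_mul_gen_mem hx hy hyx a j b c l d ?_ (fun a' b' hlt => ?_)
  · rw [toLex_add']; exact add_lt_add_of_lt_of_le hab hcd
  · rw [toLex_add'] at hlt; exact lt_trans hlt (add_lt_add_of_lt_of_le hab hcd)

include hx hy hyx in
lemma W_mul_Wlt {d1 d2 : Lex (ℕ × ℕ)} {u v : R} (hu : u ∈ W (F := F) X Y H d1)
    (hv : v ∈ Wlt (F := F) X Y H d2) : u * v ∈ Wlt (F := F) X Y H (d1 + d2) := by
  refine sp_mul_sp (fun a j b c l d hab hcd => ?_) u hu v hv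
  refine gen_mul_gen_mem hx hy hyx a j b c l d ?_ (fun a' b' hlt => ?_)
  · rw [toLex_add']; exact add_lt_add_of_le_of_lt hab hcd
  · rw [toLex_add'] at hlt; exact lt_trans hlt (add_lt_add_of_le_of_lt hab hcd)

include hx hy hyx in
lemma Wlt_mul_Wlt {d1 d2 : Lex (ℕ × ℕ)} {u v : R} (hu : u ∈ Wlt (F := F) X Y H d1)
    (hv : v ∈ Wlt (F := F) X Y H d2) : u * v ∈ Wlt (F := F) X Y H (d1 + d2) := by
  exact Wlt_mul_W hx hy hyx hu (sp_mono (fun a b hab => le_of_lt hab) hv)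


section basis
variable (B : Module.Basis (ℕ × ℕ × ℕ) F R)
  (hB : ∀ i j k : ℕ, B (i, j, k) = X ^ i * H ^ j * Y ^ k)

include hB in
lemma repr_sp_eq_zero {P : ℕ → ℕ → Prop} {u : R} (hu : u ∈ sp (F := F) X Y H P)
    (t : ℕ × ℕ × ℕ) (ht : ¬ P t.1 t.2.2) : B.repr u t = 0 := by
  induction hu using Submodule.span_induction with
  | mem w hw =>
    obtain ⟨a, j, b, hab, rfl⟩ := hw
    rw [← hB, B.repr_self, Finsupp.single_apply]
    rw [if_neg]
    rintro rfl
    exact ht hab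
  | zero => simp
  | add v w _ _ h1 h2 => rw [map_add, Finsupp.add_apply, h1, h2, add_zero]
  | smul c v _ h1 => rw [map_smul, Finsupp.smul_apply, h1, smul_zero]

include hB in
lemma repr_mono_self (a b j : ℕ) (p : F[X]) :
    B.repr (X ^ a * aeval H p * Y ^ b) (a, j, b) = p.coeff j := by
  rw [mono_expand, map_sum, Finsupp.finset_sum_apply]
  have : ∀ n ∈ p.support,
      (B.repr (p.coeff n • (X ^ a * H ^ n * Y ^ b))) (a, j, b)
        = if n = j then p.coeff n else 0 := by
    intro n _
    rw [map_smul, Finsupp.smul_apply, ← hB, B.repr_self, Finsupp.single_apply]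
    by_cases hnj : n = j
    · subst hnj; simp
    · rw [if_neg (by simpa using hnj), if_neg hnj, smul_zero]
  rw [Finset.sum_congr rfl this, Finset.sum_ite_eq' p.support j (fun n => p.coeff n)]
  by_cases hj : j ∈ p.support
  · rw [if_pos hj]
  · rw [if_neg hj]
    exact (Polynomial.notMem_support_iff.mp hj).symm

include hB in
lemma repr_mono_ne (a b : ℕ) (p : F[X]) (t : ℕ × ℕ × ℕ) (ht : (t.1, t.2.2) ≠ (a, b)) :
    B.repr (X ^ a * aeval H p * Y ^ b) t = 0 := by
  refine repr_sp_eq_zero B hB (P := fun a' b' => (a', b') = (a, b))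
    (mono_mem_sp p rfl) t ?_
  simpa using ht

/-- the (lex) degree as max over the support -/
noncomputable def D (u : R) : WithBot (Lex (ℕ × ℕ)) :=
  ((B.repr u).support.image (fun t => toLex (t.1, t.2.2))).max

include hB in
lemma D_of_form {i k : ℕ} {p : F[X]} (hp : p ≠ 0) {e : R}
    (he : e ∈ Wlt (F := F) X Y H (toLex (i, k))) :
    D B (X ^ i * aeval H p * Y ^ k + e) = ((toLex (i, k) : Lex (ℕ × ℕ)) : WithBot (Lex (ℕ × ℕ))) := by
  set u := X ^ i * aeval H p * Y ^ k + e with hu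
  apply le_antisymm
  · apply Finset.max_le
    intro d hd
    obtain ⟨t, hts, rfl⟩ := Finset.mem_image.mp hd
    by_contra hgt
    push_neg at hgt
    have hlt : toLex (i, k) < toLex (t.1, t.2.2) := by
      exact_mod_cast hgt
    have h1 : B.repr (X ^ i * aeval H p * Y ^ k) t = 0 := by
      refine repr_mono_ne B hB i k p t ?_
      intro hcontra
      rw [hcontra] at hlt
      exact lt_irrefl _ hlt
    have h2 : B.repr e t = 0 :=
      repr_sp_eq_zero B hB he t (by simp only [not_lt]; exact le_of_lt hlt)
    have : B.repr u t = 0 := by rw [hu, map_add, Finsupp.add_apply, h1, h2, add_zero]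
    exact (Finsupp.mem_support_iff.mp hts) this
  · have hval : B.repr u (i, p.natDegree, k) = p.coeff p.natDegree := by
      rw [hu, map_add, Finsupp.add_apply,
        repr_mono_self B hB i k p.natDegree p,
        repr_sp_eq_zero B hB he (i, p.natDegree, k) (by simp), add_zero]
    have hts : (i, p.natDegree, k) ∈ (B.repr u).support := by
      rw [Finsupp.mem_support_iff, hval]
      exact fun hc => hp (Polynomial.leadingCoeff_eq_zero.mp hc)
    exact Finset.le_max (Finset.mem_image.mpr ⟨_, hts, rfl⟩)

lemma D_zero : D (F := F) B 0 = ⊥ := by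
  simp [D]

include hB in
lemma exists_form {u : R} (hu : u ≠ 0) :
    ∃ (i k : ℕ) (p : F[X]) (e : R), p ≠ 0 ∧ e ∈ Wlt (F := F) X Y H (toLex (i, k)) ∧
      u = X ^ i * aeval H p * Y ^ k + e ∧ D B u = ((toLex (i, k) : Lex (ℕ × ℕ)) : WithBot (Lex (ℕ × ℕ))) := by
  have hs : (B.repr u).support.Nonempty := by
    rw [Finsupp.support_nonempty_iff]
    exact fun hc => hu (by simpa using congrArg B.repr.symm hc)
  have himg : ((B.repr u).support.image (fun t => toLex (t.1, t.2.2))).Nonempty :=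
    hs.image _
  set dmax := ((B.repr u).support.image (fun t => toLex (t.1, t.2.2))).max' himg with hdmax
  obtain ⟨t0, ht0s, ht0⟩ := Finset.mem_image.mp (Finset.max'_mem _ himg)
  set i := t0.1
  set k := t0.2.2
  have hik : toLex (i, k) = dmax := ht0
  set S1 := (B.repr u).support.filter (fun t => toLex (t.1, t.2.2) = dmax) with hS1
  set p := ∑ t ∈ S1, Polynomial.monomial t.2.1 (B.repr u t) with hp
  set e := ∑ t ∈ (B.repr u).support.filter (fun t => ¬ toLex (t.1, t.2.2) = dmax),
    B.repr u t • B t with he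
  refine ⟨i, k, p, e, ?_, ?_, ?_, ?_⟩
  · -- p ≠ 0
    intro hpz
    have hc : p.coeff t0.2.1 = B.repr u t0 := by
      rw [hp, Polynomial.finset_sum_coeff]
      rw [Finset.sum_eq_single t0]
      · simp
      · intro t hts htne
        rw [Polynomial.coeff_monomial, if_neg]
        intro hj
        apply htne
        have h1 := (Finset.mem_filter.mp hts).2
        have : (t.1, t.2.2) = (i, k) := by
          apply toLex.injective
          rw [h1, ← hik]
        have e1 : t.1 = i := (Prod.ext_iff.mp this).1
        have e2 : t.2.2 = k := (Prod.ext_iff.mp this).2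
        exact Prod.ext e1 (Prod.ext hj e2)
      · intro hnot
        exact absurd (Finset.mem_filter.mpr ⟨ht0s, ht0⟩) hnot
    rw [hpz] at hc
    simp only [Polynomial.coeff_zero] at hc
    exact (Finsupp.mem_support_iff.mp ht0s) hc.symm
  · -- e ∈ Wlt
    apply Submodule.sum_mem
    intro t hts
    apply Submodule.smul_mem
    have h2 := (Finset.mem_filter.mp hts).2
    have h1 : toLex (t.1, t.2.2) ≤ dmax :=
      Finset.le_max' ((B.repr u).support.image (fun t => toLex (t.1, t.2.2)))
        (toLex (t.1, t.2.2))
        (Finset.mem_image.mpr ⟨t, (Finset.mem_filter.mp hts).1, rfl⟩)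
    have hlt : toLex (t.1, t.2.2) < toLex (i, k) := by
      rw [hik]
      exact lt_of_le_of_ne h1 h2
    have : B t = X ^ t.1 * H ^ t.2.1 * Y ^ t.2.2 := by
      rw [← hB]
    rw [this]
    exact gen_mem_sp t.2.1 hlt
  · -- decomposition
    have hmain : X ^ i * aeval H p * Y ^ k = ∑ t ∈ S1, B.repr u t • B t := by
      rw [hp, map_sum, Finset.mul_sum, Finset.sum_mul]
      apply Finset.sum_congr rfl
      intro t hts
      have h1 := (Finset.mem_filter.mp hts).2
      have heq : (t.1, t.2.2) = (i, k) := by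
        apply toLex.injective
        rw [h1, ← hik]
      have e1 : t.1 = i := (Prod.ext_iff.mp heq).1
      have e2 : t.2.2 = k := (Prod.ext_iff.mp heq).2
      rw [Polynomial.aeval_monomial, hB, ← e1, ← e2]
      rw [Algebra.smul_def, ← mul_assoc, ← mul_assoc, ← Algebra.commutes (B.repr u t) (X ^ t.1)]
      simp [mul_assoc]
    rw [hmain, he]
    rw [Finset.sum_filter_add_sum_filter_not (B.repr u).support
      (fun t => toLex (t.1, t.2.2) = dmax) (fun t => B.repr u t • B t)]
    conv_lhs => rw [← B.linearCombination_repr u]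
    rw [Finsupp.linearCombination_apply, Finsupp.sum]
  · -- D u = dmax
    rw [show D B u = ((B.repr u).support.image (fun t => toLex (t.1, t.2.2))).max from rfl,
      hik, ← Finset.coe_max' himg]

end basis

end Generic
/-- If `q ≠ 0` and `deg f ≥ 1`, the lexicographical degree on `H_q(f,g)`
is multiplicative: `DEg (a*b) = DEg a + DEg b` for all `a, b` (with `⊥` playing the role of
`(−∞,−∞)`).  Here `B` is the basis of monomials `x^i h^j y^k`, which exists by Statement 2. -/
theorem qgha_DEg_mul {F : Type*} [Field F] (q : F) (f g : F[X])
    (hq : q ≠ 0) (hf : 1 ≤ f.degree)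
    (B : Module.Basis (ℕ × ℕ × ℕ) F (QGHA F q f g))
    (hB : ∀ i j k : ℕ, B (i, j, k) = QGHA.x q f g ^ i * QGHA.h q f g ^ j * QGHA.y q f g ^ k) :
    ∀ a b : QGHA F q f g, QGHA.DEg B (a * b) = QGHA.DEg B a + QGHA.DEg B b := by
  classical
  -- the three defining relations, in the quotient algebra
  have hx : QGHA.h q f g * QGHA.x q f g = QGHA.x q f g * aeval (QGHA.h q f g) f := by
    have := RingQuot.mkAlgHom_rel F (QGHARel.hx (F := F) (q := q) (f := f) (g := g))
    simp [QGHA.x, QGHA.h, map_mul, ← Polynomial.aeval_algHom_apply] at this; exact this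
  have hy : QGHA.y q f g * QGHA.h q f g = aeval (QGHA.h q f g) f * QGHA.y q f g := by
    have := RingQuot.mkAlgHom_rel F (QGHARel.yh (F := F) (q := q) (f := f) (g := g))
    simp [QGHA.y, QGHA.h, map_mul, ← Polynomial.aeval_algHom_apply] at this; exact this
  have hyx : QGHA.y q f g * QGHA.x q f g
      = q • (QGHA.x q f g * QGHA.y q f g) + aeval (QGHA.h q f g) g := by
    have := RingQuot.mkAlgHom_rel F (QGHARel.yx (F := F) (q := q) (f := f) (g := g))
    simp [QGHA.x, QGHA.y, QGHA.h, map_mul, map_add,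
      ← Polynomial.aeval_algHom_apply] at this
    exact this
  set X' := QGHA.x q f g
  set Y' := QGHA.y q f g
  set H' := QGHA.h q f g
  have hB' : ∀ i j k : ℕ, B (i, j, k) = X' ^ i * H' ^ j * Y' ^ k := hB
  have hDEg : ∀ u : QGHA F q f g,
      QGHA.DEg B u = (D B u).map (fun z => ofLex z) := fun u => rfl
  have hDmul : ∀ a b : QGHA F q f g, D B (a * b) = D B a + D B b := by
    intro a b
    by_cases ha : a = 0
    · subst ha; rw [zero_mul, D_zero, WithBot.bot_add]
    by_cases hb : b = 0
    · subst hb; rw [mul_zero, D_zero, WithBot.add_bot]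
    obtain ⟨i, k, p, ea, hp, hea, haeq, hDa⟩ := exists_form B hB' ha
    obtain ⟨m, n, r, eb, hr, heb, hbeq, hDb⟩ := exists_form B hB' hb
    obtain ⟨t0, ht0, hcore⟩ := core hx hy hyx i k m n p r
    have hsne : (q ^ (k * m) • (p.comp (fiter f m) * r.comp (fiter f k)) : F[X]) ≠ 0 :=
      smul_ne_zero (pow_ne_zero _ hq)
        (mul_ne_zero (comp_fiter_ne_zero hf m hp) (comp_fiter_ne_zero hf k hr))
    have hMa : X' ^ i * aeval H' p * Y' ^ k ∈ W (F := F) X' Y' H' (toLex (i, k)) :=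
      mono_mem_sp p le_rfl
    have hMb : X' ^ m * aeval H' r * Y' ^ n ∈ W (F := F) X' Y' H' (toLex (m, n)) :=
      mono_mem_sp r le_rfl
    have hE : a * b
        = X' ^ (i + m) * aeval H' (q ^ (k * m) •
            (p.comp (fiter f m) * r.comp (fiter f k))) * Y' ^ (k + n)
          + (t0 + ((X' ^ i * aeval H' p * Y' ^ k) * eb
            + (ea * (X' ^ m * aeval H' r * Y' ^ n) + ea * eb))) := by
      rw [haeq, hbeq, add_mul, mul_add, mul_add, hcore]
      abel
    have hEmem : t0 + ((X' ^ i * aeval H' p * Y' ^ k) * eb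
          + (ea * (X' ^ m * aeval H' r * Y' ^ n) + ea * eb))
        ∈ Wlt (F := F) X' Y' H' (toLex (i + m, k + n)) := by
      apply Submodule.add_mem _ ht0
      apply Submodule.add_mem
      · have := W_mul_Wlt hx hy hyx hMa heb
        rwa [← toLex_add'] at this
      · apply Submodule.add_mem
        · have := Wlt_mul_W hx hy hyx hea hMb
          rwa [← toLex_add'] at this
        · have := Wlt_mul_Wlt hx hy hyx hea heb
          rwa [← toLex_add'] at this
    rw [hE, D_of_form B hB' hsne hEmem, hDa, hDb, toLex_add', WithBot.coe_add]
  intro a b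
  rw [hDEg, hDEg, hDEg, hDmul a b]
  generalize D B a = u
  generalize D B b = v
  induction u using WithBot.recBotCoe with
  | bot => simp
  | coe u' =>
    induction v using WithBot.recBotCoe with
    | bot => simp
    | coe v' =>
      rw [← WithBot.coe_add, WithBot.map_coe, WithBot.map_coe, WithBot.map_coe,
        ← WithBot.coe_add]
      rfl
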